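/- Let X be a bounded open subset of ℝ^N, u : X → ℝ bounded Borel, δ, ε > 0. Then there exists a Borel measurable function σ : X → X with σ(x) ∈ B_ε(x) and u(σ(x)) ≤ inf_{B_ε(x)∩X} u + δ for all x ∈ X. -/

import Mathlib

open MeasureTheory Metric Set

/-- Borel almost-optimal inf-selection on open balls. -/
theorem borel_inf_selection {N : ℕ} (X : Set (EuclideanSpace ℝ (Fin N)))
    (hXo : IsOpen X) (hXb : Bornology.IsBounded X)
    (u : EuclideanSpace ℝ (Fin N) → ℝ) (hu : Measurable u)
    (C : ℝ) (hub : ∀ x, |u x| ≤ C)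
    (δ ε : ℝ) (hδ : 0 < δ) (hε : 0 < ε) :
    ∃ σ : EuclideanSpace ℝ (Fin N) → EuclideanSpace ℝ (Fin N),
      Measurable σ ∧ ∀ x ∈ X, σ x ∈ ball x ε ∩ X ∧
        u (σ x) ≤ sInf (u '' (ball x ε ∩ X)) + δ := by
  classical
  rcases X.eq_empty_or_nonempty with hX | ⟨x₀, hx₀⟩
  · exact ⟨id, measurable_id, by simp [hX]⟩
  set m : EuclideanSpace ℝ (Fin N) → ℝ := fun x => sInf (u '' (ball x ε ∩ X)) with hm
  have hbdd : ∀ x : EuclideanSpace ℝ (Fin N), BddBelow (u '' (ball x ε ∩ X)) := by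
    rintro x
    refine ⟨-C, ?_⟩
    rintro a ⟨y, -, rfl⟩
    exact (abs_le.mp (hub y)).1
  have hne : ∀ x ∈ X, (u '' (ball x ε ∩ X)).Nonempty :=
    fun x hx => ⟨u x, x, ⟨mem_ball_self hε, hx⟩, rfl⟩
  set O : ℝ → Set (EuclideanSpace ℝ (Fin N)) := fun c => ⋃ (y : EuclideanSpace ℝ (Fin N)) (_ : y ∈ X ∧ u y < c), ball y ε with hO
  have hOopen : ∀ c, IsOpen (O c) :=
    fun c => isOpen_iUnion fun y => isOpen_iUnion fun _ => isOpen_ball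
  have hmemO : ∀ c : ℝ, ∀ x ∈ X, (x ∈ O c ↔ m x < c) := by
    intro c x hx
    constructor
    · intro h
      simp only [hO, mem_iUnion] at h
      obtain ⟨y, ⟨hyX, hyc⟩, hxy⟩ := h
      have hmem : u y ∈ u '' (ball x ε ∩ X) :=
        ⟨y, ⟨mem_ball.mpr (by rw [dist_comm]; exact mem_ball.mp hxy), hyX⟩, rfl⟩
      exact lt_of_le_of_lt (csInf_le (hbdd x) hmem) hyc
    · intro h
      obtain ⟨a, has, hac⟩ := (csInf_lt_iff (hbdd x) (hne x hx)).mp h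
      obtain ⟨y, ⟨hyb, hyX⟩, rfl⟩ := has
      simp only [hO, mem_iUnion]
      exact ⟨y, ⟨hyX, hac⟩, mem_ball.mpr (by rw [dist_comm]; exact mem_ball.mp hyb)⟩
  set c : ℤ → ℝ := fun k => (k : ℝ) * (δ / 2) with hc
  set E : ℤ → Set (EuclideanSpace ℝ (Fin N)) := fun k => (X ∩ O (c (k + 1))) \ O (c k) with hE
  have hEmeas : ∀ k, MeasurableSet (E k) := by
    intro k
    rw [hE]
    exact ((hXo.measurableSet.inter (hOopen _).measurableSet).diff (hOopen _).measurableSet)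
  have hEX : ∀ k, ∀ x ∈ E k, x ∈ X := fun k x hxE => hxE.1.1
  have hEcov : ∀ x ∈ X, ∃ k, x ∈ E k := by
    intro x hx
    refine ⟨⌊m x / (δ / 2)⌋, ⟨hx, ?_⟩, ?_⟩
    · rw [hmemO _ x hx]
      have h1 := Int.lt_floor_add_one (m x / (δ / 2))
      have h2 : m x < ((⌊m x / (δ / 2)⌋ : ℝ) + 1) * (δ / 2) := by
        rw [← div_lt_iff₀ (by linarith : (0:ℝ) < δ / 2)] at *
        exact h1
      simp only [hc]
      push_cast
      linarith
    · rw [hmemO _ x hx]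
      have h1 := Int.floor_le (m x / (δ / 2))
      have h2 : (⌊m x / (δ / 2)⌋ : ℝ) * (δ / 2) ≤ m x :=
        (le_div_iff₀ (by linarith : (0:ℝ) < δ / 2)).mp h1
      simp only [hc]
      linarith
  have hEprop : ∀ k, ∀ x ∈ E k, c k ≤ m x := by
    intro k x hxE
    have := hxE.2
    rw [hmemO _ x (hEX k x hxE)] at this
    linarith [not_lt.mp this]
  -- countable subcovers
  have hsub : ∀ k : ℤ, ∃ g : ℕ → EuclideanSpace ℝ (Fin N), (E k ⊆ ⋃ n, ball (g n) ε) ∧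
      ((E k).Nonempty → ∀ n, g n ∈ X ∧ u (g n) < c (k + 1)) := by
    intro k
    obtain ⟨T, hTc, hTU⟩ := TopologicalSpace.isOpen_iUnion_countable
      (fun i : {y : EuclideanSpace ℝ (Fin N) // y ∈ X ∧ u y < c (k + 1)} => ball (i : EuclideanSpace ℝ (Fin N)) ε) (fun i => isOpen_ball)
    have hEsub : E k ⊆ ⋃ i : {y : EuclideanSpace ℝ (Fin N) // y ∈ X ∧ u y < c (k + 1)}, ball (i : EuclideanSpace ℝ (Fin N)) ε := by
      intro x hx
      have hxO : x ∈ O (c (k + 1)) := hx.1.2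
      simp only [hO, mem_iUnion] at hxO
      obtain ⟨y, hy, hxy⟩ := hxO
      exact mem_iUnion.mpr ⟨⟨y, hy⟩, hxy⟩
    rcases T.eq_empty_or_nonempty with hT | hT
    · have hEe : E k ⊆ (∅ : Set (EuclideanSpace ℝ (Fin N))) := by
        rw [← hTU, hT] at hEsub
        simpa using hEsub
      refine ⟨fun _ => x₀, fun x hx => absurd (hEe hx) (notMem_empty x), ?_⟩
      rintro ⟨x, hx⟩
      exact absurd (hEe hx) (notMem_empty x)
    · obtain ⟨f, hf⟩ := hTc.exists_eq_range hT
      refine ⟨fun n => (f n : EuclideanSpace ℝ (Fin N)), ?_, fun _ n => (f n).2⟩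
      intro x hx
      have : x ∈ ⋃ i ∈ T, ball (i : EuclideanSpace ℝ (Fin N)) ε := hTU ▸ hEsub hx
      rw [hf, biUnion_range] at this
      exact this
  choose g hg1 hg2 using hsub
  set e : ℕ ≃ ℤ × ℕ := (Denumerable.eqv (ℤ × ℕ)).symm with he
  set p : ℕ → EuclideanSpace ℝ (Fin N) → Prop := fun n x =>
    if n = 0 then x ∉ X else x ∈ E (e (n - 1)).1 ∩ ball (g (e (n - 1)).1 (e (n - 1)).2) ε
    with hp
  set v : ℕ → EuclideanSpace ℝ (Fin N) := fun n => if n = 0 then x₀ else g (e (n - 1)).1 (e (n - 1)).2 with hv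
  have htot : ∀ x, ∃ n, p n x := by
    intro x
    by_cases hx : x ∈ X
    · obtain ⟨k, hk⟩ := hEcov x hx
      obtain ⟨j, hj⟩ := mem_iUnion.mp (hg1 k hk)
      refine ⟨e.symm (k, j) + 1, ?_⟩
      simp only [hp, Nat.add_sub_cancel, if_neg (Nat.succ_ne_zero _), Equiv.apply_symm_apply]
      exact ⟨hk, hj⟩
    · exact ⟨0, by simp [hp, hx]⟩
  have hpm : ∀ n, MeasurableSet {x | p n x} := by
    intro n
    rcases Nat.eq_zero_or_pos n with rfl | hn
    · have h0 : {x | p 0 x} = Xᶜ := by ext x; simp [hp]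
      rw [h0]
      exact hXo.measurableSet.compl
    · have : {x | p n x} = E (e (n - 1)).1 ∩ ball (g (e (n - 1)).1 (e (n - 1)).2) ε := by
        ext x; simp [hp, Nat.pos_iff_ne_zero.mp hn]
      rw [this]
      exact (hEmeas _).inter measurableSet_ball
  refine ⟨fun x => v (Nat.find (htot x)), ?_, ?_⟩
  · exact Measurable.find (f := fun n _ => v n) (fun n => measurable_const) hpm htot
  · intro x hx
    have hspec := Nat.find_spec (htot x)
    rcases hfind : Nat.find (htot x) with _ | j
    · rw [hfind] at hspec
      simp only [hp, if_pos rfl] at hspec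
      exact absurd hx hspec
    · rw [hfind] at hspec
      simp only [hp, Nat.add_sub_cancel, if_neg (Nat.succ_ne_zero _)] at hspec
      obtain ⟨hxE, hxb⟩ := hspec
      set k := (e j).1
      set j' := (e j).2
      have hgood := hg2 k ⟨x, hxE⟩ j'
      have hσ : (fun x => v (Nat.find (htot x))) x = g k j' := by
        show v (Nat.find (htot x)) = g k j'
        rw [hfind]; simp [hv]; rfl
      rw [hσ]
      have hck : c k ≤ m x := hEprop k x hxE
      have hck1 : c (k + 1) = c k + δ / 2 := by simp only [hc]; push_cast; ring
      refine ⟨⟨mem_ball.mpr (by rw [dist_comm]; exact mem_ball.mp hxb), hgood.1⟩, ?_⟩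
      have := hgood.2
      rw [hck1] at this
      have : u (g k j') < m x + δ := by linarith
      exact le_of_lt this
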